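/- Every equivalence class of reward functions contains a reward of the form r(x,y) = β·log(π(y|x)/π_ref(y|x)) for some family of probability distributions π(·|x) on Y. Specifically, given any reward r₀, the function r(x,y) = β·log(π_{r₀}(y|x)/π_ref(y|x)) is equivalent to r₀ (where π_{r₀} is the optimal policy for r₀). -/

import Mathlib

/-- Every equivalence class of reward functions contains a reward of the form
`β·log(π(y|x)/π_ref(y|x))`: for any reward `r₀`, the reward
`r(x,y) = β·log(π_{r₀}(y|x)/π_ref(y|x))` (with `π_{r₀}` the optimal policy of `r₀`)
is equivalent to `r₀`, i.e. differs from it by a function of `x` alone. -/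
theorem reward_class_representative {X Y : Type*} [Fintype Y]
    (πref : X → Y → ℝ) (hrefpos : ∀ x y, 0 < πref x y)
    (href1 : ∀ x, ∑ y, πref x y = 1)
    (β : ℝ) (hβ : 0 < β)
    (r₀ : X → Y → ℝ)
    (πr₀ : X → Y → ℝ)
    (hπr₀ : ∀ x y, πr₀ x y =
      πref x y * Real.exp (r₀ x y / β) / (∑ y', πref x y' * Real.exp (r₀ x y' / β)))
    (r : X → Y → ℝ)
    (hr : ∀ x y, r x y = β * Real.log (πr₀ x y / πref x y)) :
    ∃ f : X → ℝ, ∀ x y, r x y - r₀ x y = f x := by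
  refine ⟨fun x => -β * Real.log (∑ y', πref x y' * Real.exp (r₀ x y' / β)), fun x y => ?_⟩
  have hZ : 0 < ∑ y', πref x y' * Real.exp (r₀ x y' / β) :=
    Finset.sum_pos (fun y' _ => mul_pos (hrefpos x y') (Real.exp_pos _))
      ⟨y, Finset.mem_univ y⟩
  have hratio : πr₀ x y / πref x y = Real.exp (r₀ x y / β) / (∑ y', πref x y' * Real.exp (r₀ x y' / β)) := by
    rw [hπr₀, div_right_comm, mul_div_cancel_left₀ _ (ne_of_gt (hrefpos x y))]
  rw [hr, hratio, Real.log_div (Real.exp_ne_zero _) (ne_of_gt hZ), Real.log_exp]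
  field_simp
  ring
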